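/- Let f ∈ F_∞ and let X be the solution to the ODE Ẍ + (3/t)Ẋ + ∇f(X) = 0 with X(0) = x₀, Ẋ(0) = 0. For each step size s > 0, let (x_k^{(s)}) be Nesterov's iterates starting from x₀. Then for every fixed T > 0, the maximum over 0 ≤ k ≤ T/√s of ‖x_k^{(s)} − X(k√s)‖ tends to 0 as s → 0⁺; that is, for every ε > 0 there exists s₀ > 0 such that for all 0 < s < s₀ and all integers 0 ≤ k ≤ T/√s, ‖x_k^{(s)} − X(k√s)‖ ≤ ε. -/

import Mathlib

open Set Filter Topology

noncomputable section

abbrev E (n : ℕ) := EuclideanSpace ℝ (Fin n)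

def MemFL (n : ℕ) (L : ℝ) (f : E n → ℝ) : Prop :=
  ConvexOn ℝ Set.univ f ∧ ContDiff ℝ 1 f ∧
    ∀ x y, ‖gradient f x - gradient f y‖ ≤ L * ‖x - y‖

/-- `F_∞ = ∪_{L>0} F_L`. -/
def MemFInf (n : ℕ) (f : E n → ℝ) : Prop := ∃ L > 0, MemFL n L f

def NesterovSol (n : ℕ) (f : E n → ℝ) (x0 : E n) (X : ℝ → E n) : Prop :=
  X 0 = x0 ∧
  ContDiffOn ℝ 1 X (Set.Ici 0) ∧
  ContDiffOn ℝ 2 X (Set.Ioi 0) ∧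
  derivWithin X (Set.Ici 0) 0 = 0 ∧
  ∀ t > (0:ℝ), deriv (deriv X) t + (3 / t) • deriv X t + gradient f (X t) = 0

/-- Nesterov's scheme with step size `s` starting from `x₀`:
`y₀ = x₀`, and for `k ≥ 1`, `x_k = y_{k-1} - s ∇f(y_{k-1})`,
`y_k = x_k + ((k-1)/(k+2)) (x_k - x_{k-1})`. -/
def NesterovIter (n : ℕ) (f : E n → ℝ) (s : ℝ) (x0 : E n) (x y : ℕ → E n) : Prop :=
  x 0 = x0 ∧ y 0 = x0 ∧
  ∀ k : ℕ,
    x (k + 1) = y k - s • gradient f (y k) ∧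
    y (k + 1) = x (k + 1) + ((k : ℝ) / ((k : ℝ) + 3)) • (x (k + 1) - x k)

/-- Discrete Gronwall-type recursion bound. -/
private lemma gronwall_aux (u eb : ℕ → ℝ) (q : ℝ) (hq : 1 ≤ q)
    (heb : ∀ j, 0 ≤ eb j) (P : ℕ → Prop) (hPmono : ∀ k, P (k + 1) → P k)
    (h0 : u 0 ≤ 0)
    (hstep : ∀ k, P (k + 1) → u (k + 1) ≤ q * u k + eb k) :
    ∀ k, P k → u k ≤ (∑ j ∈ Finset.range k, eb j) * q ^ k := by
  intro k
  induction k with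
  | zero => intro _; simpa using h0
  | succ k ih =>
    intro hPk
    have hq0 : (0:ℝ) ≤ q := le_trans zero_le_one hq
    have hqk : (1:ℝ) ≤ q ^ (k + 1) := one_le_pow₀ hq
    have hqk0 : (0:ℝ) ≤ q ^ k := pow_nonneg hq0 k
    have hsum : 0 ≤ ∑ j ∈ Finset.range k, eb j := Finset.sum_nonneg fun j _ => heb j
    have ihk := ih (hPmono k hPk)
    calc u (k + 1) ≤ q * u k + eb k := hstep k hPk
      _ ≤ q * ((∑ j ∈ Finset.range k, eb j) * q ^ k) + eb k := by
            have := mul_le_mul_of_nonneg_left ihk hq0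
            linarith
      _ = (∑ j ∈ Finset.range k, eb j) * q ^ (k + 1) + eb k := by ring
      _ ≤ (∑ j ∈ Finset.range k, eb j) * q ^ (k + 1) + eb k * q ^ (k + 1) := by
            nlinarith [heb k]
      _ = (∑ j ∈ Finset.range (k + 1), eb j) * q ^ (k + 1) := by
            rw [Finset.sum_range_succ]; ring

/-- Arithmetic helper for the one-step estimate. -/
private lemma nesterov_step_arith (A1 D1 a d R B L G T1 h : ℝ)
    (k1 : h * A1 ≤ h * a + h * D1)
    (k2' : (1+h)*D1 ≤ (1+h)*d + (1+h)*(h^2*(L*a)) + (1+h)*(h^2*(L*d))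
      + (1+h)*(h^3*(L*(G*T1))) + (1+h)*R)
    (b1' : (1+h)*R ≤ B*h)
    (b2' : (1+h)*(h^2*(L*a)) ≤ (1+4*L)*(h^2*a))
    (b3' : (1+h)*(h^2*(L*d)) ≤ 4*(h*(L*d)))
    (b4' : (1+h)*(h^3*(L*(G*T1))) ≤ 2*(h^3*(L*(G*T1)))) :
    h*A1 + D1 ≤ (1+(1+4*L)*h)*(h*a + d) + h*(B + 2*L*G*T1*h^2) := by
  linarith

set_option maxHeartbeats 2000000 in
/-- **Theorem 2.** As `s → 0⁺`, Nesterov's scheme converges to the ODE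
`Ẍ + (3/t)Ẋ + ∇f(X) = 0` uniformly over `0 ≤ k ≤ T/√s`, for every fixed `T > 0`. -/
theorem nesterov_scheme_tendsto_ode (n : ℕ) (f : E n → ℝ) (hf : MemFInf n f)
    (x0 : E n) (X : ℝ → E n) (hX : NesterovSol n f x0 X) (T : ℝ) (hT : 0 < T) :
    ∀ ε > 0, ∃ s₀ > 0, ∀ s : ℝ, 0 < s → s < s₀ →
      ∀ x y : ℕ → E n, NesterovIter n f s x0 x y →
        ∀ k : ℕ, (k : ℝ) ≤ T / Real.sqrt s →
          ‖x k - X ((k : ℝ) * Real.sqrt s)‖ ≤ ε := by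
  obtain ⟨L, hL, hconv, hsmooth, hlip⟩ := hf
  obtain ⟨hX0, hC1, hC2, hV0, hODE⟩ := hX
  intro ε hε
  set T₁ : ℝ := T + 1 with hT₁def
  have hT₁pos : 0 < T₁ := by simp only [hT₁def]; linarith
  have hTT₁ : T ≤ T₁ := by simp only [hT₁def]; linarith
  -- the velocity
  set V : ℝ → E n := derivWithin X (Set.Ici 0) with hVdef
  have hV00 : V 0 = 0 := hV0
  have hVcont : ContinuousOn V (Set.Ici 0) :=
    hC1.continuousOn_derivWithin (uniqueDiffOn_Ici 0) le_rfl
  have hXcont : ContinuousOn X (Set.Ici 0) := hC1.continuousOn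
  have hXdW : ∀ t ∈ Set.Ici (0:ℝ), HasDerivWithinAt X (V t) (Set.Ici 0) t :=
    fun t ht => ((hC1.differentiableOn one_ne_zero) t ht).hasDerivWithinAt
  have hXd : ∀ t : ℝ, 0 < t → HasDerivAt X (V t) t := by
    intro t ht
    exact (hXdW t (le_of_lt ht)).hasDerivAt (Ici_mem_nhds ht)
  set g : ℝ → E n := fun t => gradient f (X t) with hgdef
  have hgradlip : LipschitzWith (Real.toNNReal L) (gradient f) := by
    apply LipschitzWith.of_dist_le_mul
    intro a b
    rw [dist_eq_norm, dist_eq_norm]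
    calc ‖gradient f a - gradient f b‖ ≤ L * ‖a - b‖ := hlip a b
      _ = Real.toNNReal L * ‖a - b‖ := by rw [Real.coe_toNNReal L hL.le]
  have hgcont : ContinuousOn g (Set.Ici 0) := hgradlip.continuous.comp_continuousOn hXcont
  set A : ℝ → E n := fun t => -((3 / t) • V t) - g t with hAdef
  have hVd : ∀ t : ℝ, 0 < t → HasDerivAt V (A t) t := by
    have hd2 : ContDiffOn ℝ 1 (deriv X) (Set.Ioi 0) :=
      hC2.deriv_of_isOpen isOpen_Ioi (by norm_num)
    intro t ht
    have hVeq : ∀ u : ℝ, 0 < u → V u = deriv X u := by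
      intro u hu
      exact derivWithin_of_mem_nhds (Ici_mem_nhds hu)
    have hdd : HasDerivAt (deriv X) (deriv (deriv X) t) t := by
      have h1 := (hd2.differentiableOn one_ne_zero) t ht
      exact (h1.differentiableAt (Ioi_mem_nhds ht)).hasDerivAt
    have hev : V =ᶠ[𝓝 t] deriv X :=
      Filter.eventuallyEq_of_mem (Ioi_mem_nhds ht) (fun u hu => hVeq u hu)
    have hdv : HasDerivAt V (deriv (deriv X) t) t := hdd.congr_of_eventuallyEq hev
    have hval : deriv (deriv X) t = A t := by
      have hODEt := hODE t ht
      rw [show deriv X t = V t from (hVeq t ht).symm] at hODEt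
      have key : deriv (deriv X) t - (-((3/t) • V t) - g t) = 0 := by
        rw [← hODEt]; abel
      exact sub_eq_zero.mp key
    rwa [hval] at hdv
  -- bound on the gradient along the path
  obtain ⟨G₀, hG₀⟩ : ∃ C, ∀ t ∈ Set.Icc (0:ℝ) T₁, ‖g t‖ ≤ C :=
    isCompact_Icc.exists_bound_of_continuousOn (hgcont.mono (fun u hu => hu.1))
  set G : ℝ := max G₀ 1 with hGdef
  have hG1 : (1:ℝ) ≤ G := le_max_right _ _
  have hGpos : (0:ℝ) < G := lt_of_lt_of_le one_pos hG1
  have hGb : ∀ t ∈ Set.Icc (0:ℝ) T₁, ‖g t‖ ≤ G :=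
    fun t ht => le_trans (hG₀ t ht) (le_max_left _ _)
  -- velocity bound ‖V t‖ ≤ G t
  have hVb : ∀ t ∈ Set.Icc (0:ℝ) T₁, ‖V t‖ ≤ G * t := by
    rintro t ⟨ht0, htT⟩
    rcases eq_or_lt_of_le ht0 with rfl | ht0'
    · rw [hV00]; simp
    · have key : ∀ a ∈ Set.Ioc (0:ℝ) t, ‖t^3 • V t - a^3 • V a‖ ≤ (G * t^3) * (t - a) := by
        rintro a ⟨ha0, hat⟩
        have hder : ∀ u ∈ Set.Icc a t,
            HasDerivWithinAt (fun w : ℝ => w^3 • V w) (-(u^3) • g u) (Set.Icc a t) u := by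
          intro u hu
          have hu0 : 0 < u := lt_of_lt_of_le ha0 hu.1
          have h1 : HasDerivAt (fun w : ℝ => w^3) (3 * u^2) u := by
            simpa using hasDerivAt_pow 3 u
          have h2 := h1.smul (hVd u hu0)
          have heq : u^3 • A u + (3*u^2) • V u = -(u^3) • g u := by
            simp only [hAdef]
            match_scalars <;> field_simp <;> ring
          rw [heq] at h2
          exact h2.hasDerivWithinAt
        have hbound : ∀ u ∈ Set.Icc a t, ‖-(u^3) • g u‖ ≤ G * t^3 := by
          intro u hu
          have hu0 : (0:ℝ) ≤ u := le_trans ha0.le hu.1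
          have huT : u ≤ T₁ := le_trans hu.2 htT
          rw [norm_smul, Real.norm_eq_abs, abs_neg, abs_of_nonneg (by positivity : (0:ℝ) ≤ u^3)]
          have h1 : ‖g u‖ ≤ G := hGb u ⟨hu0, huT⟩
          have h2 : u^3 ≤ t^3 := pow_le_pow_left₀ hu0 hu.2 3
          calc u^3 * ‖g u‖ ≤ t^3 * G :=
                mul_le_mul h2 h1 (norm_nonneg _) (by positivity)
            _ = G * t^3 := mul_comm _ _
        have := Convex.norm_image_sub_le_of_norm_hasDerivWithin_le hder hbound (convex_Icc a t)
          (left_mem_Icc.mpr hat) (right_mem_Icc.mpr hat)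
        calc ‖t^3 • V t - a^3 • V a‖ ≤ (G * t^3) * ‖t - a‖ := this
          _ = (G * t^3) * (t - a) := by
              rw [Real.norm_eq_abs, abs_of_nonneg (by linarith)]
      have hlim : ‖t^3 • V t‖ ≤ (G * t^3) * t := by
        haveI : (𝓝[Set.Ioc (0:ℝ) t] (0:ℝ)).NeBot := by
          apply mem_closure_iff_nhdsWithin_neBot.mp
          rw [closure_Ioc ht0'.ne]
          exact ⟨le_rfl, ht0'.le⟩
        have h1 : Filter.Tendsto (fun a : ℝ => ‖t^3 • V t - a^3 • V a‖) (𝓝[Set.Ioc (0:ℝ) t] 0)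
            (𝓝 ‖t^3 • V t - (0:ℝ)^3 • V 0‖) := by
          have hcV : ContinuousWithinAt V (Set.Ioc (0:ℝ) t) 0 :=
            (hVcont 0 (Set.mem_Ici.mpr le_rfl)).mono (fun u hu => hu.1.le)
          have hca : ContinuousWithinAt (fun a : ℝ => a^3 • V a) (Set.Ioc (0:ℝ) t) 0 :=
            ((continuousWithinAt_id.pow 3)).smul hcV
          exact (continuousWithinAt_const.sub hca).norm
        have h2 : Filter.Tendsto (fun a : ℝ => (G * t^3) * (t - a)) (𝓝[Set.Ioc (0:ℝ) t] 0)
            (𝓝 ((G * t^3) * (t - 0))) :=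
          ((tendsto_const_nhds.mul (tendsto_const_nhds.sub tendsto_id)).mono_left
            nhdsWithin_le_nhds)
        have h3 := le_of_tendsto_of_tendsto h1 h2
          (Filter.eventually_of_mem self_mem_nhdsWithin key)
        simpa using h3
      rw [norm_smul, Real.norm_eq_abs, abs_of_nonneg (by positivity : (0:ℝ) ≤ t^3)] at hlim
      have ht3 : (0:ℝ) < t^3 := by positivity
      nlinarith [hlim]
  set M : ℝ := 4 * G with hMdef
  have hMpos : 0 < M := by simp only [hMdef]; linarith
  have hAb : ∀ t : ℝ, 0 < t → t ≤ T₁ → ‖A t‖ ≤ M := by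
    intro t ht0 htT
    have h1 : ‖A t‖ ≤ ‖(3/t) • V t‖ + ‖g t‖ := by
      calc ‖A t‖ = ‖-((3/t) • V t) - g t‖ := by rw [hAdef]
        _ ≤ ‖-((3/t) • V t)‖ + ‖g t‖ := norm_sub_le _ _
        _ = ‖(3/t) • V t‖ + ‖g t‖ := by rw [norm_neg]
    have h2 : ‖(3/t) • V t‖ = (3/t) * ‖V t‖ := by
      rw [norm_smul, Real.norm_eq_abs, abs_of_pos (by positivity)]
    have h3 : ‖V t‖ ≤ G * t := hVb t ⟨ht0.le, htT⟩
    have h4 : ‖g t‖ ≤ G := hGb t ⟨ht0.le, htT⟩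
    have h5 : (3/t) * ‖V t‖ ≤ 3 * G := by
      calc (3/t) * ‖V t‖ ≤ (3/t) * (G*t) :=
            mul_le_mul_of_nonneg_left h3 (by positivity)
        _ = 3*G := by field_simp
    simp only [hMdef]
    linarith
  -- the velocity is M-Lipschitz on [0, T₁]
  have hVlip' : ∀ a b : ℝ, 0 < a → a ≤ b → b ≤ T₁ → ‖V b - V a‖ ≤ M * (b - a) := by
    intro a b ha hab hbT
    have hder : ∀ u ∈ Set.Icc a b, HasDerivWithinAt V (A u) (Set.Icc a b) u :=
      fun u hu => (hVd u (lt_of_lt_of_le ha hu.1)).hasDerivWithinAt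
    have hbd : ∀ u ∈ Set.Icc a b, ‖A u‖ ≤ M :=
      fun u hu => hAb u (lt_of_lt_of_le ha hu.1) (le_trans hu.2 hbT)
    have := Convex.norm_image_sub_le_of_norm_hasDerivWithin_le hder hbd (convex_Icc a b)
      (left_mem_Icc.mpr hab) (right_mem_Icc.mpr hab)
    calc ‖V b - V a‖ ≤ M * ‖b - a‖ := this
      _ = M * (b - a) := by rw [Real.norm_eq_abs, abs_of_nonneg (by linarith)]
  have hVlip : ∀ a b : ℝ, 0 ≤ a → a ≤ b → b ≤ T₁ → ‖V b - V a‖ ≤ M * (b - a) := by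
    intro a b ha hab hbT
    rcases eq_or_lt_of_le ha with rfl | ha'
    · rcases eq_or_lt_of_le hab with rfl | hb'
      · simp
      · haveI : (𝓝[Set.Ioc (0:ℝ) b] (0:ℝ)).NeBot := by
          apply mem_closure_iff_nhdsWithin_neBot.mp
          rw [closure_Ioc hb'.ne]
          exact ⟨le_rfl, hb'.le⟩
        have key : ∀ᶠ a' in 𝓝[Set.Ioc (0:ℝ) b] 0, ‖V b - V a'‖ ≤ M * (b - a') := by
          refine Filter.eventually_of_mem self_mem_nhdsWithin ?_
          rintro a' ⟨h1, h2⟩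
          exact hVlip' a' b h1 h2 hbT
        have h1 : Filter.Tendsto (fun a' : ℝ => ‖V b - V a'‖) (𝓝[Set.Ioc (0:ℝ) b] 0)
            (𝓝 ‖V b - V 0‖) := by
          have hcV : ContinuousWithinAt V (Set.Ioc (0:ℝ) b) 0 :=
            (hVcont 0 (Set.mem_Ici.mpr le_rfl)).mono (fun u hu => hu.1.le)
          exact (continuousWithinAt_const.sub hcV).norm
        have h2 : Filter.Tendsto (fun a' : ℝ => M * (b - a')) (𝓝[Set.Ioc (0:ℝ) b] 0)
            (𝓝 (M * (b - 0))) :=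
          ((tendsto_const_nhds.mul (tendsto_const_nhds.sub tendsto_id)).mono_left
            nhdsWithin_le_nhds)
        have h3 := le_of_tendsto_of_tendsto h1 h2 key
        simpa using h3
    · exact hVlip' a b ha' hab hbT
  -- crude Taylor estimate
  have hCT : ∀ a b t r : ℝ, 0 ≤ a → a ≤ b → b ≤ T₁ → 0 ≤ t → t ≤ T₁ →
      (∀ u ∈ Set.Icc a b, |u - t| ≤ r) →
      ‖X b - X a - (b - a) • V t‖ ≤ M * r * (b - a) := by
    intro a b t r ha hab hbT ht0 htT hwin
    have hder : ∀ u ∈ Set.Icc a b, HasDerivWithinAt (fun w => X w - w • V t) (V u - V t)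
        (Set.Icc a b) u := by
      intro u hu
      have hu0 : (0:ℝ) ≤ u := le_trans ha hu.1
      have h1 : HasDerivWithinAt X (V u) (Set.Icc a b) u :=
        (hXdW u hu0).mono (fun w hw => le_trans ha hw.1)
      have h2 : HasDerivAt (fun w : ℝ => w • V t) ((1:ℝ) • V t) u :=
        (hasDerivAt_id u).smul_const (V t)
      rw [one_smul] at h2
      exact h1.sub h2.hasDerivWithinAt
    have hbd : ∀ u ∈ Set.Icc a b, ‖V u - V t‖ ≤ M * r := by
      intro u hu
      have hu0 : (0:ℝ) ≤ u := le_trans ha hu.1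
      have huT : u ≤ T₁ := le_trans hu.2 hbT
      have habs := hwin u hu
      have hh1 : u - t ≤ r := le_trans (le_abs_self _) habs
      have hh2 : t - u ≤ r := by
        rw [abs_sub_comm] at habs
        exact le_trans (le_abs_self _) habs
      rcases le_total u t with hc | hc
      · rw [norm_sub_rev]
        calc ‖V t - V u‖ ≤ M * (t - u) := hVlip u t hu0 hc htT
          _ ≤ M * r := mul_le_mul_of_nonneg_left hh2 hMpos.le
      · calc ‖V u - V t‖ ≤ M * (u - t) := hVlip t u ht0 hc huT
          _ ≤ M * r := mul_le_mul_of_nonneg_left hh1 hMpos.le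
    have hmvt := Convex.norm_image_sub_le_of_norm_hasDerivWithin_le hder hbd (convex_Icc a b)
      (left_mem_Icc.mpr hab) (right_mem_Icc.mpr hab)
    have heq : (X b - b • V t) - (X a - a • V t) = X b - X a - (b - a) • V t := by
      rw [sub_smul]; abel
    rw [heq] at hmvt
    calc ‖X b - X a - (b - a) • V t‖ ≤ (M * r) * ‖b - a‖ := hmvt
      _ = M * r * (b - a) := by rw [Real.norm_eq_abs, abs_of_nonneg (by linarith)]
  -- X is Lipschitz on [0, T₁]
  have hXlip : ∀ a b : ℝ, 0 ≤ a → a ≤ b → b ≤ T₁ → ‖X b - X a‖ ≤ (G * T₁) * (b - a) := by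
    intro a b ha hab hbT
    have hder : ∀ u ∈ Set.Icc a b, HasDerivWithinAt X (V u) (Set.Icc a b) u :=
      fun u hu => (hXdW u (le_trans ha hu.1)).mono (fun w hw => le_trans ha hw.1)
    have hbd : ∀ u ∈ Set.Icc a b, ‖V u‖ ≤ G * T₁ := by
      intro u hu
      have hu0 : (0:ℝ) ≤ u := le_trans ha hu.1
      have huT : u ≤ T₁ := le_trans hu.2 hbT
      calc ‖V u‖ ≤ G * u := hVb u ⟨hu0, huT⟩
        _ ≤ G * T₁ := mul_le_mul_of_nonneg_left huT hGpos.le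
    have hmvt := Convex.norm_image_sub_le_of_norm_hasDerivWithin_le hder hbd (convex_Icc a b)
      (left_mem_Icc.mpr hab) (right_mem_Icc.mpr hab)
    calc ‖X b - X a‖ ≤ (G*T₁) * ‖b - a‖ := hmvt
      _ = (G*T₁) * (b - a) := by rw [Real.norm_eq_abs, abs_of_nonneg (by linarith)]
  -- refined second-order Taylor estimate
  have hRT : ∀ t u η' : ℝ, 0 < t → t ≤ T₁ → 0 < u → u ≤ T₁ →
      (∀ w ∈ Set.Icc (min t u) (max t u), ‖A w - A t‖ ≤ η') →
      ‖X u - X t - (u - t) • V t - ((u - t) ^ 2 / 2) • A t‖ ≤ η' * (u - t) ^ 2 := by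
    intro t u η' ht0 htT hu0 huT hosc
    have htI : t ∈ Set.Icc (min t u) (max t u) := ⟨min_le_left _ _, le_max_left _ _⟩
    have huI : u ∈ Set.Icc (min t u) (max t u) := ⟨min_le_right _ _, le_max_right _ _⟩
    have hIpos : ∀ w ∈ Set.Icc (min t u) (max t u), 0 < w :=
      fun w hw => lt_of_lt_of_le (lt_min ht0 hu0) hw.1
    have hη'0 : 0 ≤ η' := le_trans (norm_nonneg (A t - A t)) (hosc t htI)
    have hwd : ∀ w ∈ Set.Icc (min t u) (max t u), |w - t| ≤ |u - t| := by
      intro w hw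
      rcases le_total t u with hc | hc
      · rw [min_eq_left hc, max_eq_right hc] at hw
        rw [abs_of_nonneg (by linarith [hw.1]), abs_of_nonneg (by linarith)]
        linarith [hw.2]
      · rw [min_eq_right hc, max_eq_left hc] at hw
        rw [abs_of_nonpos (by linarith [hw.2]), abs_of_nonpos (by linarith)]
        linarith [hw.1]
    have hstep1 : ∀ w ∈ Set.Icc (min t u) (max t u),
        ‖V w - V t - (w - t) • A t‖ ≤ η' * |u - t| := by
      have hder : ∀ w' ∈ Set.Icc (min t u) (max t u),
          HasDerivWithinAt (fun y => V y - (y - t) • A t) (A w' - A t)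
            (Set.Icc (min t u) (max t u)) w' := by
        intro w' hw'
        have h1 : HasDerivAt (fun y : ℝ => (y - t) • A t) ((1:ℝ) • A t) w' :=
          ((hasDerivAt_id w').sub_const t).smul_const (A t)
        rw [one_smul] at h1
        exact ((hVd w' (hIpos w' hw')).sub h1).hasDerivWithinAt
      intro w hw
      have hmvt := Convex.norm_image_sub_le_of_norm_hasDerivWithin_le hder
        (fun w' hw' => hosc w' hw') (convex_Icc _ _) htI hw
      simp only [sub_self, zero_smul, sub_zero] at hmvt
      have heq : (V w - (w - t) • A t) - V t = V w - V t - (w - t) • A t := by abel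
      rw [heq] at hmvt
      calc ‖V w - V t - (w - t) • A t‖ ≤ η' * ‖w - t‖ := hmvt
        _ ≤ η' * |u - t| := by
            rw [Real.norm_eq_abs]
            exact mul_le_mul_of_nonneg_left (hwd w hw) hη'0
    have hder2 : ∀ w ∈ Set.Icc (min t u) (max t u), HasDerivWithinAt
        (fun y => X y - (y - t) • V t - ((y - t) ^ 2 / 2) • A t)
        (V w - V t - (w - t) • A t) (Set.Icc (min t u) (max t u)) w := by
      intro w hw
      have h1 : HasDerivWithinAt X (V w) (Set.Icc (min t u) (max t u)) w :=
        (hXd w (hIpos w hw)).hasDerivWithinAt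
      have h2 : HasDerivAt (fun y : ℝ => (y - t) • V t) ((1:ℝ) • V t) w :=
        ((hasDerivAt_id w).sub_const t).smul_const (V t)
      rw [one_smul] at h2
      have h3 : HasDerivAt (fun y : ℝ => ((y - t) ^ 2 / 2)) (w - t) w := by
        have hp := (((hasDerivAt_id w).sub_const t).pow 2).div_const 2
        exact hp.congr_deriv (by norm_num [id])
      have h4 := h3.smul_const (A t)
      exact (h1.sub h2.hasDerivWithinAt).sub h4.hasDerivWithinAt
    have hfin := Convex.norm_image_sub_le_of_norm_hasDerivWithin_le hder2 hstep1
      (convex_Icc _ _) htI huI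
    simp only [sub_self, zero_smul, sub_zero, ne_eq, OfNat.ofNat_ne_zero,
      not_false_eq_true, zero_pow, zero_div] at hfin
    have heq2 : (X u - (u - t) • V t - ((u - t) ^ 2 / 2) • A t) - X t
        = X u - X t - (u - t) • V t - ((u - t) ^ 2 / 2) • A t := by abel
    rw [heq2] at hfin
    calc ‖X u - X t - (u - t) • V t - ((u - t) ^ 2 / 2) • A t‖
        ≤ (η' * |u - t|) * ‖u - t‖ := hfin
      _ = η' * (u - t)^2 := by
          rw [Real.norm_eq_abs, mul_assoc, abs_mul_abs_self, ← pow_two]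
  ----------------------------------------------------------------
  -- choice of constants
  set c : ℝ := 1 + 4 * L with hcdef
  have hc : 0 < c := by simp only [hcdef]; linarith
  set Eb : ℝ := Real.exp (c * T) with hEbdef
  have hEb1 : (1:ℝ) ≤ Eb := Real.one_le_exp (by positivity)
  have hEbpos : (0:ℝ) < Eb := lt_of_lt_of_le one_pos hEb1
  set δ : ℝ := min (ε / (30 * M * Eb)) T with hδdef
  have hδpos : 0 < δ := lt_min (by positivity) hT
  set η : ℝ := ε / (20 * T * Eb) with hηdef
  have hηpos : 0 < η := by positivity
  set C₂ : ℝ := 2 * L * G * T₁ with hC₂def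
  have hC₂pos : 0 < C₂ := by positivity
  -- uniform continuity of A on [δ/2, T₁]
  have hAcont : ContinuousOn A (Set.Icc (δ/2) T₁) := by
    have hsub : Set.Icc (δ/2) T₁ ⊆ Set.Ici (0:ℝ) := fun u hu => le_trans (by positivity) hu.1
    have h1 : ContinuousOn (fun t : ℝ => (3/t) • V t) (Set.Icc (δ/2) T₁) := by
      apply ContinuousOn.fun_smul
      · apply ContinuousOn.div continuousOn_const continuousOn_id
        intro u hu
        exact (lt_of_lt_of_le (by positivity) hu.1).ne'
      · exact hVcont.mono hsub
    rw [hAdef]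
    exact h1.neg.sub (hgcont.mono hsub)
  obtain ⟨δω, hδωpos, hδω⟩ : ∃ δω > 0, ∀ a ∈ Set.Icc (δ/2) T₁, ∀ b ∈ Set.Icc (δ/2) T₁,
      dist a b < δω → dist (A a) (A b) < η := by
    have := Metric.uniformContinuousOn_iff.mp
      (isCompact_Icc.uniformContinuousOn_of_continuous hAcont) η hηpos
    obtain ⟨d, hd, hdd⟩ := this
    exact ⟨d, hd, fun a ha b hb hab => hdd a ha b hb hab⟩
  set h₀ : ℝ := min (min 1 (δ/2)) (min δω (min (min (ε/(30*M*Eb)) (ε*δ/(30*M*T*Eb)))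
      (ε/(5*C₂*T*Eb)))) with hh₀def
  have hh₀pos : 0 < h₀ := by
    refine lt_min (lt_min one_pos (by positivity)) (lt_min hδωpos (lt_min (lt_min ?_ ?_) ?_)) <;>
      positivity
  refine ⟨h₀^2, by positivity, ?_⟩
  intro s hs hss₀ x y hiter k hkT
  obtain ⟨hx0, hy0, hrec⟩ := hiter
  set h : ℝ := Real.sqrt s with hhdef
  have hh : 0 < h := Real.sqrt_pos.mpr hs
  have hs2 : h ^ 2 = s := Real.sq_sqrt hs.le
  have hhh₀ : h < h₀ := by
    have := Real.sqrt_lt_sqrt hs.le hss₀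
    rwa [Real.sqrt_sq hh₀pos.le] at this
  have hh1 : h ≤ 1 := le_trans hhh₀.le (le_trans (min_le_left _ _) (min_le_left _ _))
  have hhδ2 : h ≤ δ / 2 := le_trans hhh₀.le (le_trans (min_le_left _ _) (min_le_right _ _))
  have hhδω : h < δω := lt_of_lt_of_le hhh₀ (le_trans (min_le_right _ _) (min_le_left _ _))
  have hhc1 : h ≤ ε/(30*M*Eb) := le_trans hhh₀.le (le_trans (min_le_right _ _)
    (le_trans (min_le_right _ _) (le_trans (min_le_left _ _) (min_le_left _ _))))
  have hhc2 : h ≤ ε*δ/(30*M*T*Eb) := le_trans hhh₀.le (le_trans (min_le_right _ _)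
    (le_trans (min_le_right _ _) (le_trans (min_le_left _ _) (min_le_right _ _))))
  have hhc3 : h ≤ ε/(5*C₂*T*Eb) := le_trans hhh₀.le (le_trans (min_le_right _ _)
    (le_trans (min_le_right _ _) (min_le_right _ _)))
  -- error sequences
  set ee : ℕ → E n := fun j => x j - X ((j:ℝ) * h) with heedef
  set aa : ℕ → ℝ := fun j => ‖ee j‖ with haadef
  set dd : ℕ → ℝ := fun j => ‖ee j - ee (j-1)‖ with hdddef
  set uu : ℕ → ℝ := fun j => aa j + dd j / h with huudef
  set eb : ℕ → ℝ := fun j =>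
    (if (j:ℝ) * h < δ then 6*M*h else 6*M*h^2/δ + 4*η*h) + C₂*h^2 with hebdef
  have heb0 : ∀ j, 0 ≤ eb j := by
    intro j
    simp only [hebdef]
    split_ifs <;> positivity
  have hkh : (k:ℝ) * h ≤ T := by
    rw [← le_div_iff₀ hh]; exact hkT
  -- main induction
  have hq1 : (1:ℝ) ≤ 1 + c*h := by
    have := mul_nonneg hc.le hh.le
    linarith
  have hPmono : ∀ j : ℕ, ((j+1:ℕ):ℝ) * h ≤ T → (j:ℝ) * h ≤ T := by
    intro j hj
    refine le_trans ?_ hj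
    push_cast
    exact mul_le_mul_of_nonneg_right (by linarith) hh.le
  have main : ∀ j : ℕ, (j:ℝ) * h ≤ T →
      uu j ≤ (∑ i ∈ Finset.range j, eb i) * (1 + c*h) ^ j := by
    refine gronwall_aux uu eb (1 + c*h) hq1 heb0 (fun j => (j:ℝ) * h ≤ T) hPmono ?_ ?_
    · -- u 0 = 0
      have he0 : ee 0 = 0 := by
        simp only [heedef, hx0, Nat.cast_zero, zero_mul, hX0, sub_self]
      simp only [huudef, haadef, hdddef, he0]
      simp
    · -- the key one-step estimate
      intro m hm1
      push_cast at hm1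
      rw [show ((m:ℝ)+1)*h = (m:ℝ)*h + h from by ring] at hm1
      have hm0 : (m:ℝ)*h ≤ T := by linarith [hh.le]
      rcases Nat.eq_zero_or_pos m with rfl | hmpos
      · -- base case m = 0
        have he0 : ee 0 = 0 := by
          simp only [heedef, hx0, Nat.cast_zero, zero_mul, hX0, sub_self]
        have huu0 : uu 0 = 0 := by
          simp only [huudef, haadef, hdddef, he0]
          simp
        have hx1 : x 1 = x0 - s • gradient f x0 := by
          have h1 := (hrec 0).1
          rwa [hy0] at h1
        have hhT₁ : h ≤ T₁ := by simp only [hT₁def]; linarith [hh1]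
        have hXh : ‖X h - X 0‖ ≤ M * h * h := by
          have hwin : ∀ u ∈ Set.Icc (0:ℝ) h, |u - 0| ≤ h := by
            intro u hu
            rw [sub_zero, abs_of_nonneg hu.1]
            exact hu.2
          have h2 := hCT 0 h 0 h le_rfl hh.le hhT₁ le_rfl hT₁pos.le hwin
          simp only [hV00, smul_zero, sub_zero] at h2
          exact h2
        have hgx0 : ‖gradient f x0‖ ≤ G := by
          have h3 : gradient f x0 = g 0 := by rw [hgdef]; simp [hX0]
          rw [h3]
          exact hGb 0 ⟨le_rfl, hT₁pos.le⟩
        have heq1 : ee 1 = -(s • gradient f x0) - (X h - X 0) := by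
          simp only [heedef, Nat.cast_one, one_mul, hx1, hX0]
          abel
        have haa1 : aa 1 ≤ 2*M*h^2 := by
          have h4 : aa 1 = ‖ee 1‖ := rfl
          rw [h4, heq1]
          calc ‖-(s • gradient f x0) - (X h - X 0)‖
              ≤ ‖-(s • gradient f x0)‖ + ‖X h - X 0‖ := norm_sub_le _ _
            _ = s * ‖gradient f x0‖ + ‖X h - X 0‖ := by
                rw [norm_neg, norm_smul, Real.norm_eq_abs, abs_of_nonneg hs.le]
            _ ≤ s * G + M*h*h := by
                have h5 := mul_le_mul_of_nonneg_left hgx0 hs.le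
                linarith [hXh]
            _ ≤ 2*M*h^2 := by
                rw [← hs2]
                have hGM : G ≤ M := by simp only [hMdef]; linarith
                have h5 := mul_le_mul_of_nonneg_left hGM (sq_nonneg h)
                linarith
        have hdd1 : dd 1 = aa 1 := by
          have h6 : dd 1 = ‖ee 1 - ee 0‖ := rfl
          rw [h6, he0, sub_zero]
        have heb00 : eb 0 = 6*M*h + C₂*h^2 := by
          simp only [hebdef, Nat.cast_zero, zero_mul]
          rw [if_pos hδpos]
        have hdivh : aa 1 / h ≤ 2*M*h := by
          rw [div_le_iff₀ hh]
          linarith [haa1]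
        have haa1' : aa 1 ≤ 2*M*h := by
          have hsq : h*h ≤ h := mul_le_of_le_one_left hh.le hh1
          have h5 := mul_le_mul_of_nonneg_left hsq (by linarith [hMpos] : (0:ℝ) ≤ 2*M)
          linarith [haa1]
        calc uu 1 = aa 1 + dd 1 / h := rfl
          _ = aa 1 + aa 1 / h := by rw [hdd1]
          _ ≤ 2*M*h + 2*M*h := by linarith [haa1', hdivh]
          _ ≤ 6*M*h + C₂*h^2 := by
              linarith [mul_nonneg hMpos.le hh.le, mul_nonneg hC₂pos.le (sq_nonneg h)]
          _ = (1 + c*h) * uu 0 + eb 0 := by rw [huu0, heb00]; ring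
      · -- main case m ≥ 1
        have hm1le : (1:ℝ) ≤ (m:ℝ) := by exact_mod_cast hmpos
        have hmr0 : (0:ℝ) < (m:ℝ) := by linarith
        set t : ℝ := (m:ℝ)*h with htdef
        have ht0 : 0 < t := mul_pos hmr0 hh
        have htT : t ≤ T := hm0
        have hthT : t + h ≤ T := hm1
        have hth1 : (0:ℝ) ≤ t - h := by
          rw [htdef]
          have := mul_nonneg (by linarith : (0:ℝ) ≤ (m:ℝ)-1) hh.le
          linarith
        have htT₁ : t ≤ T₁ := le_trans htT hTT₁
        have hthT₁ : t + h ≤ T₁ := by linarith [hthT, hTT₁]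
        have hcastp : ((m+1:ℕ):ℝ)*h = t + h := by rw [htdef]; push_cast; ring
        have hcastm : ((m-1:ℕ):ℝ)*h = t - h := by
          rw [htdef, Nat.cast_sub hmpos]
          push_cast
          ring
        set lam : ℝ := ((m:ℝ)-1)/((m:ℝ)+2) with hlamdef
        have hm2pos : (0:ℝ) < (m:ℝ)+2 := by linarith
        have hlam0 : 0 ≤ lam := div_nonneg (by linarith) (by linarith)
        have hlam1 : lam ≤ 1 := by
          rw [hlamdef, div_le_one hm2pos]
          linarith
        have hyeq : y m = x m + lam • (x m - x (m-1)) := by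
          have h1 := (hrec (m-1)).2
          rw [Nat.sub_add_cancel hmpos] at h1
          have h2 : ((m-1:ℕ):ℝ) = (m:ℝ) - 1 := by
            rw [Nat.cast_sub hmpos]
            push_cast
            ring
          rw [h2, show (m:ℝ) - 1 + 3 = (m:ℝ) + 2 from by ring] at h1
          exact h1
        have hxeq : x (m+1) = y m - s • gradient f (y m) := (hrec m).1
        set r : E n := X (t+h) - X t - lam • (X t - X (t-h)) + s • g t with hrdef
        have hee1 : ee (m+1) = x (m+1) - X (t+h) := by
          simp only [heedef]
          rw [hcastp]
        have hee2 : ee m = x m - X t := by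
          simp only [heedef]; rw [← htdef]
        have hee3 : ee (m-1) = x (m-1) - X (t-h) := by
          simp only [heedef]
          rw [hcastm]
        have hid : ee (m+1) - ee m = lam • (ee m - ee (m-1)) - s • (gradient f (y m) - g t) - r := by
          rw [hee1, hee2, hee3, hxeq, hyeq, hrdef]
          simp only [hgdef]
          module
        have haam : ‖ee m‖ = aa m := rfl
        have hddm : ‖ee m - ee (m-1)‖ = dd m := rfl
        have hddm1 : ‖ee (m+1) - ee m‖ = dd (m+1) := rfl
        have hddmnn : 0 ≤ dd m := hddm ▸ norm_nonneg _
        have hXstep : ‖X t - X (t-h)‖ ≤ (G*T₁)*h := by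
          have h5 := hXlip (t-h) t hth1 (by linarith [hh.le]) htT₁
          rw [show t - (t - h) = h from by ring] at h5
          exact h5
        have hymid : y m - X t = ee m + lam • (ee m - ee (m-1)) + lam • (X t - X (t-h)) := by
          rw [hee2, hee3, hyeq]
          module
        have hym : ‖y m - X t‖ ≤ aa m + dd m + (G*T₁)*h := by
          rw [hymid]
          have b1 : lam * dd m ≤ dd m := mul_le_of_le_one_left hddmnn hlam1
          have b2 : lam * ‖X t - X (t-h)‖ ≤ (G*T₁)*h := by
            calc lam * ‖X t - X (t-h)‖ ≤ 1 * ‖X t - X (t-h)‖ :=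
                  mul_le_mul_of_nonneg_right hlam1 (norm_nonneg _)
              _ = ‖X t - X (t-h)‖ := one_mul _
              _ ≤ (G*T₁)*h := hXstep
          calc ‖ee m + lam • (ee m - ee (m-1)) + lam • (X t - X (t-h))‖
              ≤ ‖ee m + lam • (ee m - ee (m-1))‖ + ‖lam • (X t - X (t-h))‖ := norm_add_le _ _
            _ ≤ ‖ee m‖ + ‖lam • (ee m - ee (m-1))‖ + ‖lam • (X t - X (t-h))‖ := by
                linarith [norm_add_le (ee m) (lam • (ee m - ee (m-1)))]
            _ ≤ aa m + dd m + (G*T₁)*h := by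
                rw [norm_smul, norm_smul, Real.norm_eq_abs, abs_of_nonneg hlam0, haam, hddm]
                linarith [b1, b2]
        have hgradbd : ‖gradient f (y m) - g t‖ ≤ L * (aa m + dd m + (G*T₁)*h) := by
          have h6 : ‖gradient f (y m) - gradient f (X t)‖ ≤ L * ‖y m - X t‖ := hlip _ _
          have h7 : g t = gradient f (X t) := by rw [hgdef]
          rw [h7]
          exact le_trans h6 (mul_le_mul_of_nonneg_left hym hL.le)
        have hdnext : dd (m+1) ≤ dd m + h^2 * (L * (aa m + dd m + (G*T₁)*h)) + ‖r‖ := by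
          calc dd (m+1) = ‖ee (m+1) - ee m‖ := rfl
            _ = ‖lam • (ee m - ee (m-1)) - s • (gradient f (y m) - g t) - r‖ := by rw [hid]
            _ ≤ ‖lam • (ee m - ee (m-1)) - s • (gradient f (y m) - g t)‖ + ‖r‖ := norm_sub_le _ _
            _ ≤ ‖lam • (ee m - ee (m-1))‖ + ‖s • (gradient f (y m) - g t)‖ + ‖r‖ := by
                linarith [norm_sub_le (lam • (ee m - ee (m-1))) (s • (gradient f (y m) - g t))]
            _ ≤ dd m + h^2 * (L * (aa m + dd m + (G*T₁)*h)) + ‖r‖ := by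
                rw [norm_smul, norm_smul, Real.norm_eq_abs, Real.norm_eq_abs,
                  abs_of_nonneg hlam0, abs_of_nonneg hs.le, hddm, ← hs2]
                have b1 : lam * dd m ≤ dd m := mul_le_of_le_one_left hddmnn hlam1
                have b2 := mul_le_mul_of_nonneg_left hgradbd (sq_nonneg h)
                linarith
        have hanext : aa (m+1) ≤ aa m + dd (m+1) := by
          calc aa (m+1) = ‖ee (m+1)‖ := rfl
            _ = ‖ee m + (ee (m+1) - ee m)‖ := by congr 1; abel
            _ ≤ ‖ee m‖ + ‖ee (m+1) - ee m‖ := norm_add_le _ _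
            _ = aa m + dd (m+1) := by rw [haam, hddm1]
        have hVt : ‖V t‖ ≤ G*t := hVb t ⟨ht0.le, htT₁⟩
        have hgt : ‖g t‖ ≤ G := hGb t ⟨ht0.le, htT₁⟩
        have hrb : ‖r‖ ≤ (if t < δ then 3*M*h^2 else (3*M*h/δ + 2*η)*h^2) := by
          split_ifs with hcase
          · -- crude bound
            have b1 : ‖X (t+h) - X t - h • V t‖ ≤ M*h*h := by
              have hwin : ∀ u ∈ Set.Icc t (t+h), |u - t| ≤ h := by
                intro u hu
                rw [abs_of_nonneg (by linarith [hu.1])]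
                linarith [hu.2]
              have h8 := hCT t (t+h) t h ht0.le (by linarith [hh.le]) hthT₁ ht0.le htT₁ hwin
              rw [show t + h - t = h from by ring] at h8
              exact h8
            have b2 : ‖X t - X (t-h) - h • V t‖ ≤ M*h*h := by
              have hwin : ∀ u ∈ Set.Icc (t-h) t, |u - t| ≤ h := by
                intro u hu
                rw [abs_of_nonpos (by linarith [hu.2])]
                linarith [hu.1]
              have h8 := hCT (t-h) t t h hth1 (by linarith [hh.le]) htT₁ ht0.le htT₁ hwin
              rw [show t - (t - h) = h from by ring] at h8
              exact h8
            have hlam' : 1 - lam = 3/((m:ℝ)+2) := by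
              rw [hlamdef]
              field_simp
              ring
            have hlamb : (1-lam)*t ≤ 3*h := by
              rw [hlam', htdef, div_mul_eq_mul_div, div_le_iff₀ hm2pos]
              have : (0:ℝ) ≤ 6*h := by positivity
              linarith
            have hrid : r = (X (t+h) - X t - h • V t) - lam • (X t - X (t-h) - h • V t)
                + (((1-lam)*h) • V t + s • g t) := by
              rw [hrdef]
              module
            rw [hrid]
            have n1 : ‖(X (t+h) - X t - h • V t) - lam • (X t - X (t-h) - h • V t)
                + (((1-lam)*h) • V t + s • g t)‖
                ≤ ‖X (t+h) - X t - h • V t‖ + ‖lam • (X t - X (t-h) - h • V t)‖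
                  + (‖((1-lam)*h) • V t‖ + ‖s • g t‖) := by
              have u1 := norm_add_le ((X (t+h) - X t - h • V t) - lam • (X t - X (t-h) - h • V t))
                (((1-lam)*h) • V t + s • g t)
              have u2 := norm_sub_le (X (t+h) - X t - h • V t) (lam • (X t - X (t-h) - h • V t))
              have u3 := norm_add_le (((1-lam)*h) • V t) (s • g t)
              linarith
            have c2 : ‖lam • (X t - X (t-h) - h • V t)‖ ≤ M*h*h := by
              rw [norm_smul, Real.norm_eq_abs, abs_of_nonneg hlam0]
              have h5 : lam * ‖X t - X (t-h) - h • V t‖ ≤ ‖X t - X (t-h) - h • V t‖ :=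
                mul_le_of_le_one_left (norm_nonneg _) hlam1
              linarith [b2]
            have c3 : ‖((1-lam)*h) • V t‖ ≤ 3*G*h^2 := by
              have hlamh : (0:ℝ) ≤ (1-lam)*h := mul_nonneg (by linarith) hh.le
              rw [norm_smul, Real.norm_eq_abs, abs_of_nonneg hlamh]
              calc (1-lam)*h*‖V t‖ ≤ (1-lam)*h*(G*t) :=
                    mul_le_mul_of_nonneg_left hVt hlamh
                _ = (G*h)*((1-lam)*t) := by ring
                _ ≤ (G*h)*(3*h) := mul_le_mul_of_nonneg_left hlamb (by positivity)
                _ = 3*G*h^2 := by ring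
            have c4 : ‖s • g t‖ ≤ G*h^2 := by
              rw [norm_smul, Real.norm_eq_abs, abs_of_nonneg hs.le, ← hs2]
              have h5 := mul_le_mul_of_nonneg_left hgt (sq_nonneg h)
              linarith
            have hM4 : 4*G*h^2 = M*h^2 := by rw [hMdef]
            linarith [n1, b1, c2, c3, c4, hM4]
          · -- refined bound
            push_neg at hcase
            have hδ2t : δ/2 ≤ t - h := by linarith [hhδ2]
            have htmem : t ∈ Set.Icc (δ/2) T₁ := ⟨by linarith [hδpos], htT₁⟩
            have hoscf : ∀ w ∈ Set.Icc (min t (t+h)) (max t (t+h)), ‖A w - A t‖ ≤ η := by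
              intro w hw
              rw [min_eq_left (by linarith [hh.le]), max_eq_right (by linarith [hh.le])] at hw
              have hwmem : w ∈ Set.Icc (δ/2) T₁ := ⟨by linarith [hw.1], by linarith [hw.2]⟩
              have hdist : dist w t < δω := by
                rw [Real.dist_eq, abs_of_nonneg (by linarith [hw.1])]
                linarith [hw.2, hhδω]
              have h9 := hδω w hwmem t htmem hdist
              rw [dist_eq_norm] at h9
              exact h9.le
            have hoscb : ∀ w ∈ Set.Icc (min t (t-h)) (max t (t-h)), ‖A w - A t‖ ≤ η := by
              intro w hw
              rw [min_eq_right (by linarith [hh.le]), max_eq_left (by linarith [hh.le])] at hw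
              have hwmem : w ∈ Set.Icc (δ/2) T₁ := ⟨by linarith [hw.1], by linarith [hw.2]⟩
              have hdist : dist w t < δω := by
                rw [Real.dist_eq, abs_of_nonpos (by linarith [hw.2])]
                linarith [hw.1, hhδω]
              have h9 := hδω w hwmem t htmem hdist
              rw [dist_eq_norm] at h9
              exact h9.le
            have b1 := hRT t (t+h) η ht0 htT₁ (by linarith [hh]) hthT₁ hoscf
            rw [show t + h - t = h from by ring] at b1
            have b2 := hRT t (t-h) η ht0 htT₁ (by linarith : (0:ℝ) < t - h) (by linarith) hoscb
            rw [show t - h - t = -h from by ring, neg_sq] at b2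
            have hmne : (m:ℝ) ≠ 0 := ne_of_gt hmr0
            have hm2ne : ((m:ℝ)+2) ≠ 0 := ne_of_gt hm2pos
            have hcase' : δ ≤ (m:ℝ)*h := by rw [← htdef]; exact hcase
            have hrid : r = (X (t+h) - X t - h • V t - (h^2/2) • A t)
                + lam • (X (t-h) - X t - (-h) • V t - (h^2/2) • A t)
                + (-(6*h/((m:ℝ)*((m:ℝ)+2)))) • V t
                + (-(3*h^2/(2*((m:ℝ)+2)))) • A t := by
              rw [hrdef, ← hs2, hlamdef]
              simp only [hAdef]
              rw [htdef]
              match_scalars <;> field_simp <;> ring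
            have hm1h : 1/((m:ℝ)+2) ≤ h/δ := by
              rw [div_le_div_iff₀ hm2pos hδpos]
              have : (0:ℝ) ≤ 2*h := by positivity
              linarith [hcase']
            have c3 : ‖(-(6*h/((m:ℝ)*((m:ℝ)+2)))) • V t‖ ≤ (3/2)*M*h^3/δ := by
              rw [norm_smul, Real.norm_eq_abs, abs_neg, abs_of_nonneg (by positivity)]
              have s1 : 6*h/((m:ℝ)*((m:ℝ)+2)) * ‖V t‖
                  ≤ 6*h/((m:ℝ)*((m:ℝ)+2)) * (G*((m:ℝ)*h)) := by
                apply mul_le_mul_of_nonneg_left _ (by positivity)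
                rw [← htdef]
                exact hVt
              have s2 : 6*h/((m:ℝ)*((m:ℝ)+2)) * (G*((m:ℝ)*h)) = 6*G*h^2*(1/((m:ℝ)+2)) := by
                field_simp
              have s3 : 6*G*h^2*(1/((m:ℝ)+2)) ≤ 6*G*h^2*(h/δ) :=
                mul_le_mul_of_nonneg_left hm1h (by positivity)
              have s4 : 6*G*h^2*(h/δ) = (3/2)*M*h^3/δ := by rw [hMdef]; ring
              linarith
            have c4 : ‖(-(3*h^2/(2*((m:ℝ)+2)))) • A t‖ ≤ (3/2)*M*h^3/δ := by
              rw [norm_smul, Real.norm_eq_abs, abs_neg, abs_of_nonneg (by positivity)]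
              have hAt : ‖A t‖ ≤ M := hAb t ht0 htT₁
              calc 3*h^2/(2*((m:ℝ)+2)) * ‖A t‖ ≤ 3*h^2/(2*((m:ℝ)+2)) * M :=
                    mul_le_mul_of_nonneg_left hAt (by positivity)
                _ = (3/2)*M*h^2*(1/((m:ℝ)+2)) := by field_simp
                _ ≤ (3/2)*M*h^2*(h/δ) := mul_le_mul_of_nonneg_left hm1h (by positivity)
                _ = (3/2)*M*h^3/δ := by ring
            have cQ : ‖lam • (X (t-h) - X t - (-h) • V t - (h^2/2) • A t)‖ ≤ η*h^2 := by
              rw [norm_smul, Real.norm_eq_abs, abs_of_nonneg hlam0]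
              have h5 : lam * ‖X (t-h) - X t - (-h) • V t - (h^2/2) • A t‖
                  ≤ ‖X (t-h) - X t - (-h) • V t - (h^2/2) • A t‖ :=
                mul_le_of_le_one_left (norm_nonneg _) hlam1
              linarith [b2]
            rw [hrid]
            have n1 := norm_add_le ((X (t+h) - X t - h • V t - (h^2/2) • A t)
                + lam • (X (t-h) - X t - (-h) • V t - (h^2/2) • A t)
                + (-(6*h/((m:ℝ)*((m:ℝ)+2)))) • V t) ((-(3*h^2/(2*((m:ℝ)+2)))) • A t)
            have n2 := norm_add_le ((X (t+h) - X t - h • V t - (h^2/2) • A t)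
                + lam • (X (t-h) - X t - (-h) • V t - (h^2/2) • A t))
                ((-(6*h/((m:ℝ)*((m:ℝ)+2)))) • V t)
            have n3 := norm_add_le (X (t+h) - X t - h • V t - (h^2/2) • A t)
                (lam • (X (t-h) - X t - (-h) • V t - (h^2/2) • A t))
            have target_eq : (3*M*h/δ + 2*η)*h^2
                = η*h^2 + η*h^2 + ((3/2)*M*h^3/δ + (3/2)*M*h^3/δ) := by ring
            rw [target_eq]
            linarith only [n1, n2, n3, b1, cQ, c3, c4]
        have hBnn : (0:ℝ) ≤ (if t < δ then 6*M*h else 6*M*h^2/δ + 4*η*h) := by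
          split_ifs <;> positivity
        have hRB : 2*‖r‖ ≤ (if t < δ then 6*M*h else 6*M*h^2/δ + 4*η*h)*h := by
          split_ifs at hrb ⊢ with hcase
          · linarith only [hrb]
          · rw [show (6*M*h^2/δ + 4*η*h)*h = 2*((3*M*h/δ + 2*η)*h^2) from by ring]
            linarith only [hrb]
        have hebm : eb m = (if t < δ then 6*M*h else 6*M*h^2/δ + 4*η*h) + C₂*h^2 := by
          simp only [hebdef]; rw [← htdef]
        have hGT : (0:ℝ) ≤ G*T₁ := by positivity
        have hgoal' : h*(aa (m+1)) + dd (m+1) ≤ (1+c*h)*(h*(aa m) + dd m)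
            + h*((if t < δ then 6*M*h else 6*M*h^2/δ + 4*η*h) + C₂*h^2) := by
          have f1 : 0 ≤ aa m := haam ▸ norm_nonneg _
          have f3 : 0 ≤ dd (m+1) := hddm1 ▸ norm_nonneg _
          have f5 : 0 ≤ ‖r‖ := norm_nonneg _
          have k1 : h*(aa (m+1)) ≤ h*(aa m) + h*(dd (m+1)) := by
            have h10 := mul_le_mul_of_nonneg_left hanext hh.le
            linarith [h10]
          have k2 : (1+h)*(dd (m+1)) ≤ (1+h)*(dd m + h^2 * (L * (aa m + dd m + (G*T₁)*h)) + ‖r‖) :=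
            mul_le_mul_of_nonneg_left hdnext (by linarith [hh.le])
          have hhR : h*‖r‖ ≤ ‖r‖ := mul_le_of_le_one_left f5 hh1
          have b1' : (1+h)*‖r‖ ≤ (if t < δ then 6*M*h else 6*M*h^2/δ + 4*η*h)*h := by
            linarith [hRB, hhR]
          have w2 : (0:ℝ) ≤ h^2*(aa m) := mul_nonneg (sq_nonneg h) f1
          have w3 : (0:ℝ) ≤ L*(h^2*(aa m)) := mul_nonneg hL.le w2
          have hha : h*(h^2*(L*(aa m))) ≤ h^2*(L*(aa m)) :=
            mul_le_of_le_one_left (mul_nonneg (sq_nonneg h) (mul_nonneg hL.le f1)) hh1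
          have b2' : (1+h)*(h^2*(L*(aa m))) ≤ (1+4*L)*(h^2*(aa m)) := by
            linarith [hha, w2, w3]
          have wLd : (0:ℝ) ≤ h*(L*(dd m)) := mul_nonneg hh.le (mul_nonneg hL.le hddmnn)
          have hhd1 : h*(h*(L*(dd m))) ≤ h*(L*(dd m)) := mul_le_of_le_one_left wLd hh1
          have hhd2 : h*(h*(h*(L*(dd m)))) ≤ h*(h*(L*(dd m))) :=
            mul_le_of_le_one_left (mul_nonneg hh.le wLd) hh1
          have b3' : (1+h)*(h^2*(L*(dd m))) ≤ 4*(h*(L*(dd m))) := by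
            linarith [hhd1, hhd2, wLd]
          have wP : (0:ℝ) ≤ h^3*(L*(G*T₁)) := by positivity
          have hhp : h*(h^3*(L*(G*T₁))) ≤ h^3*(L*(G*T₁)) := mul_le_of_le_one_left wP hh1
          have b4' : (1+h)*(h^3*(L*(G*T₁))) ≤ 2*(h^3*(L*(G*T₁))) := by linarith [hhp]
          have k2' : (1+h)*(dd (m+1)) ≤ (1+h)*(dd m) + (1+h)*(h^2*(L*(aa m)))
              + (1+h)*(h^2*(L*(dd m))) + (1+h)*(h^3*(L*(G*T₁))) + (1+h)*‖r‖ := by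
            have expand : (1+h)*(dd m + h^2 * (L * (aa m + dd m + (G*T₁)*h)) + ‖r‖)
                = (1+h)*(dd m) + (1+h)*(h^2*(L*(aa m)))
                  + (1+h)*(h^2*(L*(dd m))) + (1+h)*(h^3*(L*(G*T₁))) + (1+h)*‖r‖ := by ring
            linarith [k2, expand.le, expand.ge]
          rw [hcdef, hC₂def]
          exact nesterov_step_arith (aa (m+1)) (dd (m+1)) (aa m) (dd m) ‖r‖
            (if t < δ then 6*M*h else 6*M*h^2/δ + 4*η*h) L G T₁ h k1 k2' b1' b2' b3' b4'
        have e1 : uu (m+1) = (h*(aa (m+1)) + dd (m+1))/h := by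
          simp only [huudef]
          field_simp
        have e2 : (1+c*h)*(uu m) + eb m
            = ((1+c*h)*(h*(aa m) + dd m)
              + h*((if t < δ then 6*M*h else 6*M*h^2/δ + 4*η*h) + C₂*h^2))/h := by
          simp only [huudef]
          rw [hebm]
          field_simp
        rw [e1, e2]
        exact (div_le_div_iff_of_pos_right hh).mpr hgoal'
  -- conclusion
  have hmain := main k hkh
  have haak : aa k ≤ uu k := by
    simp only [huudef]
    have : 0 ≤ dd k / h := by positivity
    linarith
  have hqk : (1 + c*h)^k ≤ Eb := by
    have h1 : (1 + c*h) ≤ Real.exp (c*h) := by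
      have := Real.add_one_le_exp (c*h)
      linarith
    calc (1 + c*h)^k ≤ (Real.exp (c*h))^k := pow_le_pow_left₀ (by positivity) h1 k
      _ = Real.exp ((k:ℝ)*(c*h)) := by rw [← Real.exp_nat_mul]
      _ ≤ Real.exp (c*T) := by
          apply Real.exp_le_exp.mpr
          rw [show (k:ℝ)*(c*h) = c*((k:ℝ)*h) by ring]
          exact mul_le_mul_of_nonneg_left hkh hc.le
      _ = Eb := rfl
  have hsum : (∑ i ∈ Finset.range k, eb i) ≤ 6*M*δ + 6*M*h + (6*M*T*h/δ + 4*η*T + C₂*T*h) := by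
    have step1 : ∀ i, eb i ≤ (if (i:ℝ)*h < δ then 6*M*h else 0) + (6*M*h^2/δ + 4*η*h + C₂*h^2) := by
      intro i
      simp only [hebdef]
      split_ifs with hc'
      · have : (0:ℝ) ≤ 6*M*h^2/δ + 4*η*h := by positivity
        linarith
      · linarith
    have hfil : (∑ i ∈ Finset.range k, if (i:ℝ)*h < δ then 6*M*h else 0)
        = (((Finset.range k).filter (fun i : ℕ => (i:ℝ)*h < δ)).card : ℝ) * (6*M*h) := by
      rw [← Finset.sum_filter, Finset.sum_const, nsmul_eq_mul]
    have hcard : ((((Finset.range k).filter (fun i : ℕ => (i:ℝ)*h < δ)).card : ℕ) : ℝ) ≤ δ/h + 1 := by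
      have hsub : (Finset.range k).filter (fun i : ℕ => (i:ℝ)*h < δ) ⊆
          Finset.range (Nat.floor (δ/h) + 1) := by
        intro i hi
        simp only [Finset.mem_filter, Finset.mem_range] at hi ⊢
        have h1 : (i:ℝ) ≤ δ/h := by
          rw [le_div_iff₀ hh]
          exact hi.2.le
        have := Nat.le_floor h1
        omega
      have h2 := Finset.card_le_card hsub
      rw [Finset.card_range] at h2
      calc ((((Finset.range k).filter (fun i : ℕ => (i:ℝ)*h < δ)).card : ℕ) : ℝ)
          ≤ ((Nat.floor (δ/h) + 1 : ℕ) : ℝ) := by exact_mod_cast h2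
        _ ≤ δ/h + 1 := by
            push_cast
            have := Nat.floor_le (show (0:ℝ) ≤ δ/h by positivity)
            linarith
    have hfirst : (∑ i ∈ Finset.range k, if (i:ℝ)*h < δ then 6*M*h else 0)
        ≤ 6*M*δ + 6*M*h := by
      rw [hfil]
      have h3 : (δ/h + 1) * (6*M*h) = 6*M*δ + 6*M*h := by
        field_simp
      calc (((Finset.range k).filter (fun i : ℕ => (i:ℝ)*h < δ)).card : ℝ) * (6*M*h)
          ≤ (δ/h + 1) * (6*M*h) := mul_le_mul_of_nonneg_right hcard (by positivity)
        _ = 6*M*δ + 6*M*h := h3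
    have hk2 : (k:ℝ)*(6*M*h^2/δ + 4*η*h + C₂*h^2) ≤ 6*M*T*h/δ + 4*η*T + C₂*T*h := by
      calc (k:ℝ)*(6*M*h^2/δ + 4*η*h + C₂*h^2) ≤ (T/h)*(6*M*h^2/δ + 4*η*h + C₂*h^2) :=
            mul_le_mul_of_nonneg_right hkT (by positivity)
        _ = 6*M*T*h/δ + 4*η*T + C₂*T*h := by field_simp
    calc (∑ i ∈ Finset.range k, eb i)
        ≤ ∑ i ∈ Finset.range k,
            ((if (i:ℝ)*h < δ then 6*M*h else 0) + (6*M*h^2/δ + 4*η*h + C₂*h^2)) :=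
          Finset.sum_le_sum (fun i _ => step1 i)
      _ = (∑ i ∈ Finset.range k, if (i:ℝ)*h < δ then 6*M*h else 0)
            + (k:ℝ) * (6*M*h^2/δ + 4*η*h + C₂*h^2) := by
          rw [Finset.sum_add_distrib, Finset.sum_const, Finset.card_range, nsmul_eq_mul]
      _ ≤ (6*M*δ + 6*M*h) + (6*M*T*h/δ + 4*η*T + C₂*T*h) := add_le_add hfirst hk2
      _ = 6*M*δ + 6*M*h + (6*M*T*h/δ + 4*η*T + C₂*T*h) := by ring
  have hfinal : (6*M*δ + 6*M*h + (6*M*T*h/δ + 4*η*T + C₂*T*h)) * Eb ≤ ε := by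
    have p1 : 6*M*δ*Eb ≤ ε/5 := by
      have hδ1 : δ ≤ ε/(30*M*Eb) := min_le_left _ _
      calc 6*M*δ*Eb = (6*M*Eb)*δ := by ring
        _ ≤ (6*M*Eb)*(ε/(30*M*Eb)) :=
            mul_le_mul_of_nonneg_left hδ1 (by positivity)
        _ = ε/5 := by field_simp; ring
    have p2 : 6*M*h*Eb ≤ ε/5 := by
      calc 6*M*h*Eb = (6*M*Eb)*h := by ring
        _ ≤ (6*M*Eb)*(ε/(30*M*Eb)) :=
            mul_le_mul_of_nonneg_left hhc1 (by positivity)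
        _ = ε/5 := by field_simp; ring
    have p3 : 6*M*T*h/δ*Eb ≤ ε/5 := by
      have hq : 6*M*T*h/δ*Eb = (6*M*T*Eb/δ)*h := by ring
      calc 6*M*T*h/δ*Eb = (6*M*T*Eb/δ)*h := hq
        _ ≤ (6*M*T*Eb/δ)*(ε*δ/(30*M*T*Eb)) :=
            mul_le_mul_of_nonneg_left hhc2 (by positivity)
        _ = ε/5 := by
            field_simp
            ring
    have p4 : 4*η*T*Eb ≤ ε/5 := by
      rw [hηdef]
      have : 4*(ε/(20*T*Eb))*T*Eb = ε/5 := by field_simp; ring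
      linarith [this.le]
    have p5 : C₂*T*h*Eb ≤ ε/5 := by
      calc C₂*T*h*Eb = (C₂*T*Eb)*h := by ring
        _ ≤ (C₂*T*Eb)*(ε/(5*C₂*T*Eb)) :=
            mul_le_mul_of_nonneg_left hhc3 (by positivity)
        _ = ε/5 := by field_simp
    have expand : (6*M*δ + 6*M*h + (6*M*T*h/δ + 4*η*T + C₂*T*h)) * Eb
        = 6*M*δ*Eb + 6*M*h*Eb + (6*M*T*h/δ*Eb + 4*η*T*Eb + C₂*T*h*Eb) := by ring
    rw [expand]
    linarith
  have hsumnn : 0 ≤ ∑ i ∈ Finset.range k, eb i := Finset.sum_nonneg fun i _ => heb0 i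
  calc ‖x k - X ((k:ℝ) * h)‖ = aa k := rfl
    _ ≤ uu k := haak
    _ ≤ (∑ i ∈ Finset.range k, eb i) * (1 + c*h)^k := hmain
    _ ≤ (6*M*δ + 6*M*h + (6*M*T*h/δ + 4*η*T + C₂*T*h)) * Eb := by
        apply mul_le_mul hsum hqk (by positivity) (by positivity)
    _ ≤ ε := hfinal
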